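/- Let R be a D×D real matrix with spectral norm at most λ. Then for any v ∈ ℝ^D, ⟨v, v + ReLU(R v)⟩ ≥ (1 − λ)‖v‖₂², and hence if λ < 1 and v ≠ 0, the cosine similarity between v and x̂ = v + ReLU(R v) satisfies C(v, x̂) ≥ (1 − λ)/(1 + λ). -/

import Mathlib

open RealInnerProductSpace

noncomputable def relu {D : ℕ} (u : EuclideanSpace ℝ (Fin D)) : EuclideanSpace ℝ (Fin D) :=
  WithLp.toLp 2 (fun j => max (u j) 0)

noncomputable def cosSim {D : ℕ} (a b : EuclideanSpace ℝ (Fin D)) : ℝ :=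
  ⟪a, b⟫ / (‖a‖ * ‖b‖)

lemma norm_relu_le {D : ℕ} (u : EuclideanSpace ℝ (Fin D)) : ‖relu u‖ ≤ ‖u‖ := by
  rw [EuclideanSpace.norm_eq, EuclideanSpace.norm_eq]
  apply Real.sqrt_le_sqrt
  apply Finset.sum_le_sum
  intro i _
  have : |relu u i| ≤ |u i| := by
    simp only [relu, PiLp.toLp_apply, abs_le]
    constructor
    · exact le_trans (neg_abs_le _) (le_max_left _ _)
    · exact max_le (le_abs_self _) (abs_nonneg _)
  exact pow_le_pow_left₀ (abs_nonneg _) this 2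

theorem inner_residual_lower {D : ℕ}
    (R : EuclideanSpace ℝ (Fin D) →L[ℝ] EuclideanSpace ℝ (Fin D))
    (lam : ℝ) (hR : ‖R‖ ≤ lam) (v : EuclideanSpace ℝ (Fin D)) :
    (1 - lam) * ‖v‖ ^ 2 ≤ ⟪v, v + relu (R v)⟫ ∧
    (lam < 1 → v ≠ 0 → (1 - lam) / (1 + lam) ≤ cosSim v (v + relu (R v))) := by
  have hlam0 : 0 ≤ lam := le_trans (norm_nonneg R) hR
  have hrn : ‖relu (R v)‖ ≤ lam * ‖v‖ :=
    le_trans (norm_relu_le _) (le_trans (R.le_opNorm v)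
      (mul_le_mul_of_nonneg_right hR (norm_nonneg v)))
  have hcs : |⟪v, relu (R v)⟫| ≤ ‖v‖ * (lam * ‖v‖) :=
    le_trans (abs_real_inner_le_norm _ _) (mul_le_mul_of_nonneg_left hrn (norm_nonneg v))
  have hinner : (1 - lam) * ‖v‖ ^ 2 ≤ ⟪v, v + relu (R v)⟫ := by
    rw [inner_add_right, real_inner_self_eq_norm_sq]
    have := neg_abs_le ⟪v, relu (R v)⟫
    nlinarith [abs_nonneg ⟪v, relu (R v)⟫]
  refine ⟨hinner, fun hlt hv => ?_⟩
  have hv0 : 0 < ‖v‖ := norm_pos_iff.mpr hv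
  have hxn : ‖v + relu (R v)‖ ≤ (1 + lam) * ‖v‖ := by
    calc ‖v + relu (R v)‖ ≤ ‖v‖ + ‖relu (R v)‖ := norm_add_le _ _
      _ ≤ ‖v‖ + lam * ‖v‖ := by linarith
      _ = (1 + lam) * ‖v‖ := by ring
  have hx0 : 0 < ‖v + relu (R v)‖ := by
    rcases eq_or_ne (v + relu (R v)) 0 with h | h
    · exfalso
      rw [h, inner_zero_right] at hinner
      nlinarith [mul_pos (by linarith : (0:ℝ) < 1 - lam) (pow_pos hv0 2)]
    · exact norm_pos_iff.mpr h
  have key : (1 - lam) * ‖v‖ ^ 2 / ((1 + lam) * ‖v‖ ^ 2) ≤ cosSim v (v + relu (R v)) := by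
    unfold cosSim
    have hnn : (0:ℝ) ≤ (1 - lam) * ‖v‖ ^ 2 := mul_nonneg (by linarith) (sq_nonneg _)
    apply div_le_div₀ (le_trans hnn hinner)
    · exact hinner
    · positivity
    · calc ‖v‖ * ‖v + relu (R v)‖ ≤ ‖v‖ * ((1 + lam) * ‖v‖) :=
            mul_le_mul_of_nonneg_left hxn (norm_nonneg v)
        _ = (1 + lam) * ‖v‖ ^ 2 := by ring
  have heq : (1 - lam) * ‖v‖ ^ 2 / ((1 + lam) * ‖v‖ ^ 2) = (1 - lam) / (1 + lam) := by
    rw [mul_div_mul_right _ _ (by positivity : (‖v‖ : ℝ) ^ 2 ≠ 0)]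
  linarith [key, heq ▸ key]
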